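/- Let 𝔖 be a weakly translative cofinite G-semimatroid. Then the triple S_𝔖:=(E_𝔖, 𝒞̲, rk̲) (with rk̲ restricted to 𝒞̲) is a locally ranked triple, i.e., 𝒞̲ is a simplicial complex on E_𝔖 and rk̲ satisfies (R1), (R2), (R3) on 𝒞̲, and S_𝔖 moreover satisfies (CR2): if A,B∈𝒞̲ and rk̲(A)<rk̲(B) then A∪{b}∈𝒞̲ for some b∈B∖A. -/

import Mathlib

open scoped Classical Pointwise


/-- A finitary semimatroid on the ground set `S`: a nonempty, finite-dimensional
simplicial complex `C` of finite subsets of `S` (containing all singletons), together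
with a rank function satisfying (R1)-(R3), (CR1), (CR2). -/
structure FinSemimatroid (S : Type*) [DecidableEq S] where
  C : Set (Finset S)
  rk : Finset S → ℕ
  nonempty : C.Nonempty
  downClosed : ∀ ⦃X Y : Finset S⦄, X ∈ C → Y ⊆ X → Y ∈ C
  singleton_mem : ∀ x : S, ({x} : Finset S) ∈ C
  finDim : ∃ d : ℕ, ∀ X ∈ C, X.card ≤ d
  r1 : ∀ X ∈ C, rk X ≤ X.card
  r2 : ∀ ⦃X Y : Finset S⦄, X ∈ C → Y ∈ C → X ⊆ Y → rk X ≤ rk Y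
  r3 : ∀ ⦃X Y : Finset S⦄, X ∈ C → Y ∈ C → X ∪ Y ∈ C →
    rk (X ∪ Y) + rk (X ∩ Y) ≤ rk X + rk Y
  cr1 : ∀ ⦃X Y : Finset S⦄, X ∈ C → Y ∈ C → rk X = rk (X ∩ Y) → X ∪ Y ∈ C
  cr2 : ∀ ⦃X Y : Finset S⦄, X ∈ C → Y ∈ C → rk X < rk Y →
    ∃ y ∈ Y, y ∉ X ∧ insert y X ∈ C

namespace FinSemimatroid

variable {S : Type*} [DecidableEq S]

/-- The closure of a central set. -/
def cl (M : FinSemimatroid S) (X : Finset S) : Set S :=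
  {y : S | insert y X ∈ M.C ∧ M.rk (insert y X) = M.rk X}

/-- A flat is a closed central set. -/
def IsFlat (M : FinSemimatroid S) (X : Finset S) : Prop :=
  X ∈ M.C ∧ M.cl X = (X : Set S)

/-- The poset of flats, ordered by inclusion. -/
abbrev Flats (M : FinSemimatroid S) : Type _ := {X : Finset S // M.IsFlat X}

/-- A simple finitary semimatroid. -/
def Simple (M : FinSemimatroid S) : Prop :=
  (∀ x : S, M.rk {x} = 1) ∧
    ∀ x y : S, x ≠ y → ({x, y} : Finset S) ∈ M.C → M.rk {x, y} = 2

end FinSemimatroid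

/-- A poset is chain-finite if all its chains are finite. -/
def ChainFinite (L : Type*) [PartialOrder L] : Prop :=
  ∀ c : Set L, IsChain (· ≤ ·) c → c.Finite

/-- An atom of a bounded-below poset: an element covering the minimum. -/
def PosetAtom {L : Type*} [PartialOrder L] (a : L) : Prop :=
  ∃ bot : L, IsBot bot ∧ bot ⋖ a

/-- `L` (with rank function `rk`) is a finite geometric lattice (finite, bounded below,
a lattice, ranked by `rk`, atomic and semimodular) with at most `N` atoms. -/
def IsFinGeomLatticeAtMost (L : Type*) [PartialOrder L] (rk : L → ℕ) (N : ℕ) : Prop :=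
  Finite L ∧
    ∃ bot : L, IsBot bot ∧
      (∀ x y : L, ∃ m : L, IsGLB {x, y} m) ∧
      (∀ x y : L, ∃ j : L, IsLUB {x, y} j) ∧
      (∀ x y : L, x ⋖ y → rk y = rk x + 1) ∧
      (∀ x : L, ∃ A : Set L, (∀ a ∈ A, bot ⋖ a) ∧ IsLUB A x) ∧
      (∀ x y m j : L, IsGLB {x, y} m → IsLUB {x, y} j → rk j + rk m ≤ rk x + rk y) ∧
      Nat.card {a : L | bot ⋖ a} ≤ N
/-- A `G`-semimatroid: an action of `G` on a finitary semimatroid, preserving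
centrality and rank. -/
structure GSemimatroid (G S : Type*) [Group G] [MulAction G S] [DecidableEq S]
    extends FinSemimatroid S where
  smul_mem : ∀ (g : G) ⦃X : Finset S⦄, X ∈ C → X.image (g • ·) ∈ C
  rk_smul : ∀ (g : G) ⦃X : Finset S⦄, X ∈ C → rk (X.image (g • ·)) = rk X

namespace GSemimatroid

variable {G S : Type*} [Group G] [MulAction G S] [DecidableEq S]

/-- The set of orbits `E_𝔖 = S/G`. -/
abbrev E (G S : Type*) [Group G] [MulAction G S] : Type _ :=
  Quotient (MulAction.orbitRel G S)

/-- The orbit of a point. -/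
def orbOf (G : Type*) {S : Type*} [Group G] [MulAction G S] (x : S) : E G S :=
  Quotient.mk (MulAction.orbitRel G S) x

/-- `X̲`: the set of orbits met by `X`. -/
def under (G : Type*) {S : Type*} [Group G] [MulAction G S] (X : Finset S) :
    Set (E G S) :=
  orbOf G '' (X : Set S)

variable (M : GSemimatroid G S)

/-- `𝒞̲ = {X̲ : X ∈ 𝒞}`. -/
def CQ : Set (Set (E G S)) := {A | ∃ X ∈ M.C, under G X = A}

/-- `rk̲ A = max { rk X : X ∈ 𝒞, X̲ ⊆ A }`. -/
noncomputable def rkQ (A : Set (E G S)) : ℕ :=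
  sSup {n : ℕ | ∃ X ∈ M.C, under G X ⊆ A ∧ M.rk X = n}

/-- `𝒞_A`: the central sets lying over `A`. -/
def CA (A : Set (E G S)) : Set (Finset S) := {X | X ∈ M.C ∧ under G X = A}

/-- The type of central sets. -/
abbrev Cen : Type _ := {X : Finset S // X ∈ M.C}

/-- The `G`-orbit relation on central sets. -/
def cenRel (X Y : M.Cen) : Prop := ∃ g : G, X.1.image (g • ·) = Y.1

/-- The set `𝒞/G` of orbits of central sets. -/
def COrb : Type _ := Quot M.cenRel

/-- The action is cofinite if `𝒞/G` is finite. -/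
def Cofinite : Prop := Finite M.COrb

/-- `m_𝔖(A) = |𝒞_A / G|`. -/
noncomputable def m (A : Set (E G S)) : ℕ :=
  Nat.card {O : M.COrb // ∃ X : M.Cen, under G X.1 = A ∧ Quot.mk M.cenRel X = O}

def WeaklyTranslative : Prop :=
  ∀ (g : G) (x : S), ({x, g • x} : Finset S) ∈ M.C →
    M.rk {x, g • x} = M.rk ({x} : Finset S)

def Translative : Prop :=
  ∀ (g : G) (x : S), ({x, g • x} : Finset S) ∈ M.C → g • x = x

def Centered : Prop := ∃ X ∈ M.C, under G X = (Set.univ : Set (E G S))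

def Normal (_M : GSemimatroid G S) : Prop :=
  ∀ x : S, Subgroup.Normal (MulAction.stabilizer G x)

def AlmostArithmetic : Prop := M.Translative ∧ M.Normal

/-- The action is arithmetic: almost-arithmetic, and for every central `X` the set
`W(X) ⊆ Γ^X` is a subgroup (expressed via representative families of group elements). -/
def Arithmetic : Prop :=
  M.AlmostArithmetic ∧
    ∀ ⦃X : Finset S⦄, X ∈ M.C → ∀ γ δ : S → G,
      X.image (fun x => γ x • x) ∈ M.C → X.image (fun x => δ x • x) ∈ M.C →
        X.image (fun x => (γ x * δ x) • x) ∈ M.C ∧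
          X.image (fun x => (γ x)⁻¹ • x) ∈ M.C

/-- Remove from `X` all elements of the orbit `a₀`. -/
noncomputable def strip (a₀ : E G S) (X : Finset S) : Finset S :=
  X.filter (fun x => orbOf G x ≠ a₀)

/-- The Tutte polynomial of a `G`-semimatroid, as a function `ℤ × ℤ → ℤ`. -/
noncomputable def Tutte (x y : ℤ) : ℤ :=
  ∑ᶠ A ∈ M.CQ, (M.m A : ℤ) * (x - 1) ^ (M.rkQ Set.univ - M.rkQ A) *
    (y - 1) ^ (Nat.card A - M.rkQ A)

end GSemimatroid

open GSemimatroid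

section Aux

variable {G S : Type*} [Group G] [MulAction G S] [DecidableEq S] (M : GSemimatroid G S)

lemma aux_empty_mem : (∅ : Finset S) ∈ M.C := by
  obtain ⟨X, hX⟩ := M.nonempty
  exact M.downClosed hX (Finset.empty_subset X)

lemma aux_rk_empty : M.rk ∅ = 0 :=
  Nat.le_zero.mp (by simpa using M.r1 ∅ (aux_empty_mem M))

lemma aux_under_empty : under G (∅ : Finset S) = ∅ := by simp [under]

lemma aux_under_mono {X Y : Finset S} (h : X ⊆ Y) : under G X ⊆ under G Y :=
  Set.image_mono (by exact_mod_cast h)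

lemma aux_under_insert (y : S) (X : Finset S) :
    under G (insert y X) = insert (orbOf G y) (under G X) := by
  simp [under, Set.image_insert_eq]

lemma aux_mem_under {X : Finset S} {x : S} (hx : x ∈ X) : orbOf G x ∈ under G X :=
  ⟨x, Finset.mem_coe.mpr hx, rfl⟩

lemma aux_under_eq_coe (X : Finset S) :
    under G X = (↑(X.image (orbOf G)) : Set (E G S)) := by
  simp [under, Finset.coe_image]

lemma aux_bdd (A : Set (E G S)) :
    BddAbove {n : ℕ | ∃ X ∈ M.C, under G X ⊆ A ∧ M.rk X = n} := by
  obtain ⟨d, hd⟩ := M.finDim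
  exact ⟨d, by rintro n ⟨Y, hY, -, rfl⟩; exact (M.r1 Y hY).trans (hd Y hY)⟩

lemma aux_rk_le_rkQ {X : Finset S} {A : Set (E G S)} (hX : X ∈ M.C)
    (h : under G X ⊆ A) : M.rk X ≤ M.rkQ A :=
  le_csSup (aux_bdd M A) ⟨X, hX, h, rfl⟩

lemma aux_rkQ_exists (A : Set (E G S)) :
    ∃ Y ∈ M.C, under G Y ⊆ A ∧ M.rk Y = M.rkQ A := by
  have hne : {n : ℕ | ∃ X ∈ M.C, under G X ⊆ A ∧ M.rk X = n}.Nonempty :=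
    ⟨M.rk ∅, ∅, aux_empty_mem M, by simp [aux_under_empty], rfl⟩
  have h := Nat.sSup_mem hne (aux_bdd M A)
  obtain ⟨Y, hY, hsub, hrk⟩ := h
  exact ⟨Y, hY, hsub, hrk⟩

lemma aux_sdiff_insert (X Y : Finset S) (y : S) :
    Y \ insert y X = (Y \ X).erase y := by
  ext z
  simp only [Finset.mem_sdiff, Finset.mem_erase, Finset.mem_insert]
  tauto

lemma aux_ext : ∀ (n : ℕ) (X Y : Finset S), X ∈ M.C → Y ∈ M.C → (Y \ X).card ≤ n →
    ∃ Z ∈ M.C, X ⊆ Z ∧ Z ⊆ X ∪ Y ∧ M.rk Y ≤ M.rk Z := by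
  intro n
  induction n with
  | zero =>
    intro X Y hX hY hcard
    have hYX : Y ⊆ X := by
      rw [← Finset.sdiff_eq_empty_iff_subset, ← Finset.card_eq_zero]
      omega
    exact ⟨X, hX, subset_refl X, Finset.subset_union_left, M.r2 hY hX hYX⟩
  | succ n ih =>
    intro X Y hX hY hcard
    by_cases hle : M.rk Y ≤ M.rk X
    · exact ⟨X, hX, subset_refl X, Finset.subset_union_left, hle⟩
    · obtain ⟨y, hyY, hyX, hins⟩ := M.cr2 hX hY (lt_of_not_ge hle)
      have hcard' : (Y \ insert y X).card ≤ n := by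
        rw [aux_sdiff_insert,
          Finset.card_erase_of_mem (Finset.mem_sdiff.mpr ⟨hyY, hyX⟩)]
        omega
      obtain ⟨Z, hZ, hsub1, hsub2, hrk⟩ := ih (insert y X) Y hins hY hcard'
      refine ⟨Z, hZ, (Finset.subset_insert y X).trans hsub1, hsub2.trans ?_, hrk⟩
      intro z hz
      rcases Finset.mem_union.mp hz with hz | hz
      · rcases Finset.mem_insert.mp hz with rfl | hz
        · exact Finset.mem_union_right _ hyY
        · exact Finset.mem_union_left _ hz
      · exact Finset.mem_union_right _ hz

lemma aux_cr2 : ∀ (n : ℕ) (X Y : Finset S), X ∈ M.C → Y ∈ M.C → (Y \ X).card ≤ n →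
    (∀ W ∈ M.C, under G W ⊆ under G X → M.rk W < M.rk Y) →
    ∃ y ∈ Y, orbOf G y ∉ under G X ∧ insert y X ∈ M.C := by
  intro n
  induction n with
  | zero =>
    intro X Y hX hY hcard hlt
    have hYX : Y ⊆ X := by
      rw [← Finset.sdiff_eq_empty_iff_subset, ← Finset.card_eq_zero]
      omega
    exact absurd (M.r2 hY hX hYX) (not_le.mpr (hlt X hX subset_rfl))
  | succ n ih =>
    intro X Y hX hY hcard hlt
    obtain ⟨y, hyY, hyX, hins⟩ := M.cr2 hX hY (hlt X hX subset_rfl)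
    by_cases hb : orbOf G y ∈ under G X
    · have hunder : under G (insert y X) = under G X := by
        rw [aux_under_insert]
        exact Set.insert_eq_self.mpr hb
      have hcard' : (Y \ insert y X).card ≤ n := by
        rw [aux_sdiff_insert,
          Finset.card_erase_of_mem (Finset.mem_sdiff.mpr ⟨hyY, hyX⟩)]
        omega
      obtain ⟨y', hy'Y, hy'X, hins'⟩ := ih (insert y X) Y hins hY hcard'
        (by rw [hunder]; exact hlt)
      rw [hunder] at hy'X
      refine ⟨y', hy'Y, hy'X, M.downClosed hins' ?_⟩
      exact Finset.insert_subset_insert y' (Finset.subset_insert y X)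
    · exact ⟨y, hyY, hb, hins⟩

lemma aux_rk_le_under_card (hwt : M.WeaklyTranslative) :
    ∀ (n : ℕ) (Y : Finset S), Y ∈ M.C → Y.card ≤ n →
      M.rk Y ≤ (Y.image (orbOf G)).card := by
  intro n
  induction n with
  | zero =>
    intro Y hY hcard
    have : Y = ∅ := Finset.card_eq_zero.mp (Nat.le_zero.mp hcard)
    subst this
    simp [aux_rk_empty]
  | succ n ih =>
    intro Y hY hcard
    by_cases hinj : ∀ a ∈ Y, ∀ b ∈ Y, orbOf G a = orbOf G b → a = b
    · rw [Finset.card_image_of_injOn (fun a ha b hb h => hinj a ha b hb h)]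
      exact M.r1 Y hY
    · push_neg at hinj
      obtain ⟨a, haY, b, hbY, hab, hne⟩ := hinj
      have horb : a ∈ MulAction.orbit G b := Quotient.exact hab
      obtain ⟨g, hg0⟩ := horb
      have hg : g • b = a := hg0
      have hpairsub : ({b, a} : Finset S) ⊆ Y := by
        intro z hz
        rcases Finset.mem_insert.mp hz with rfl | hz
        · exact hbY
        · rcases Finset.mem_singleton.mp hz with rfl
          exact haY
      have hpairC : ({b, a} : Finset S) ∈ M.C := M.downClosed hY hpairsub
      have hpair : M.rk {b, a} = M.rk {b} := by
        have h := hwt g b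
        rw [hg] at h
        exact h hpairC
      have hY' : Y.erase a ∈ M.C := M.downClosed hY (Finset.erase_subset a Y)
      have hun : Y.erase a ∪ {b, a} = Y := by
        ext z
        simp only [Finset.mem_union, Finset.mem_erase, Finset.mem_insert,
          Finset.mem_singleton]
        constructor
        · rintro (⟨_, hz⟩ | rfl | rfl) <;> first | exact hz | exact hbY | exact haY
        · intro hz
          by_cases hza : z = a
          · right; right; exact hza
          · left; exact ⟨hza, hz⟩
      have hin : Y.erase a ∩ ({b, a} : Finset S) = {b} := by
        ext z
        simp only [Finset.mem_inter, Finset.mem_erase, Finset.mem_insert,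
          Finset.mem_singleton]
        constructor
        · rintro ⟨⟨hza, _⟩, rfl | rfl⟩
          · rfl
          · exact absurd rfl hza
        · rintro rfl
          exact ⟨⟨fun h => hne h.symm, hbY⟩, Or.inl rfl⟩
      have h3 := M.r3 hY' hpairC (by rw [hun]; exact hY)
      rw [hun, hin, hpair] at h3
      have hrkY : M.rk Y ≤ M.rk (Y.erase a) := by omega
      have hcard' : (Y.erase a).card ≤ n := by
        rw [Finset.card_erase_of_mem haY]
        omega
      calc M.rk Y ≤ M.rk (Y.erase a) := hrkY
        _ ≤ ((Y.erase a).image (orbOf G)).card := ih (Y.erase a) hY' hcard'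
        _ ≤ (Y.image (orbOf G)).card :=
            Finset.card_le_card (Finset.image_subset_image (Finset.erase_subset a Y))

end Aux

/-- For a weakly translative cofinite `G`-semimatroid, the triple
`S_𝔖 = (E_𝔖, 𝒞̲, rk̲)` is a locally ranked triple (a simplicial complex with a rank
function satisfying (R1),(R2),(R3)) which moreover satisfies (CR2). -/
theorem quotientTriple_locallyRanked_and_CR2
    {G S : Type*} [Group G] [MulAction G S] [DecidableEq S]
    (M : GSemimatroid G S) (hcof : M.Cofinite) (hwt : M.WeaklyTranslative) :
    (∅ : Set (E G S)) ∈ M.CQ ∧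
    (∀ ⦃A B : Set (E G S)⦄, A ∈ M.CQ → B ⊆ A → B ∈ M.CQ) ∧
    (∀ e : E G S, ({e} : Set (E G S)) ∈ M.CQ) ∧
    (∀ A ∈ M.CQ, M.rkQ A ≤ Nat.card A) ∧
    (∀ ⦃A B : Set (E G S)⦄, A ∈ M.CQ → B ∈ M.CQ → A ⊆ B → M.rkQ A ≤ M.rkQ B) ∧
    (∀ ⦃A B : Set (E G S)⦄, A ∈ M.CQ → B ∈ M.CQ → A ∪ B ∈ M.CQ →
      M.rkQ (A ∪ B) + M.rkQ (A ∩ B) ≤ M.rkQ A + M.rkQ B) ∧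
    (∀ ⦃A B : Set (E G S)⦄, A ∈ M.CQ → B ∈ M.CQ → M.rkQ A < M.rkQ B →
      ∃ b ∈ B, b ∉ A ∧ insert b A ∈ M.CQ) := by
  refine ⟨?_, ?_, ?_, ?_, ?_, ?_, ?_⟩
  -- (1) ∅ ∈ 𝒞̲
  · exact ⟨∅, aux_empty_mem M, aux_under_empty⟩
  -- (2) downward closure
  · rintro A B ⟨X, hX, rfl⟩ hBA
    refine ⟨X.filter (fun x => orbOf G x ∈ B), M.downClosed hX (Finset.filter_subset _ X), ?_⟩
    ext e
    constructor
    · rintro ⟨x, hx, rfl⟩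
      exact (Finset.mem_filter.mp hx).2
    · intro he
      obtain ⟨x, hx, rfl⟩ := hBA he
      exact ⟨x, Finset.mem_coe.mpr (Finset.mem_filter.mpr ⟨hx, he⟩), rfl⟩
  -- (3) singletons
  · intro e
    obtain ⟨x, rfl⟩ := Quotient.exists_rep e
    exact ⟨{x}, M.singleton_mem x, by simp [under]; rfl⟩
  -- (4) R1
  · rintro A ⟨X, hX, rfl⟩
    obtain ⟨Y, hY, hsub, hrk⟩ := aux_rkQ_exists M (under G X)
    rw [← hrk]
    have h1 : M.rk Y ≤ (Y.image (orbOf G)).card :=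
      aux_rk_le_under_card M hwt Y.card Y hY le_rfl
    have h2 : (Y.image (orbOf G)) ⊆ (X.image (orbOf G)) := by
      rw [← Finset.coe_subset, ← aux_under_eq_coe, ← aux_under_eq_coe]
      exact hsub
    have h3 : Nat.card (under G X) = (X.image (orbOf G)).card := by
      rw [aux_under_eq_coe]
      rw [Nat.card_coe_set_eq, Set.ncard_coe_finset]
    rw [h3]
    exact h1.trans (Finset.card_le_card h2)
  -- (5) R2
  · intro A B _ _ hAB
    obtain ⟨Y, hY, hsub, hrk⟩ := aux_rkQ_exists M A
    rw [← hrk]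
    exact aux_rk_le_rkQ M hY (hsub.trans hAB)
  -- (6) R3
  · intro A B _ _ _
    obtain ⟨X, hX, hXsub, hXrk⟩ := aux_rkQ_exists M (A ∩ B)
    obtain ⟨W, hW, hWsub, hWrk⟩ := aux_rkQ_exists M (A ∪ B)
    obtain ⟨Y, hY, hXY, hYXW, hrkY⟩ := aux_ext M (W \ X).card X W hX hW le_rfl
    have hYsub : under G Y ⊆ A ∪ B := by
      refine (aux_under_mono hYXW).trans ?_
      intro e he
      rw [under] at he
      obtain ⟨x, hx, rfl⟩ := he
      rcases Finset.mem_union.mp (Finset.mem_coe.mp hx) with h | h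
      · exact Or.inl (hXsub (aux_mem_under h)).1
      · exact hWsub (aux_mem_under h)
    set YA := Y.filter (fun x => orbOf G x ∈ A) with hYA
    set YB := Y.filter (fun x => orbOf G x ∈ B) with hYB
    have hYAC : YA ∈ M.C := M.downClosed hY (Finset.filter_subset _ Y)
    have hYBC : YB ∈ M.C := M.downClosed hY (Finset.filter_subset _ Y)
    have hunion : YA ∪ YB = Y := by
      ext z
      simp only [hYA, hYB, Finset.mem_union, Finset.mem_filter]
      constructor
      · rintro (⟨h, _⟩ | ⟨h, _⟩) <;> exact h
      · intro hz
        rcases hYsub (aux_mem_under hz) with h | h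
        · exact Or.inl ⟨hz, h⟩
        · exact Or.inr ⟨hz, h⟩
    have hXinter : X ⊆ YA ∩ YB := by
      intro x hx
      have hxY : x ∈ Y := hXY hx
      have hxA : orbOf G x ∈ A ∩ B := hXsub (aux_mem_under hx)
      exact Finset.mem_inter.mpr
        ⟨Finset.mem_filter.mpr ⟨hxY, hxA.1⟩, Finset.mem_filter.mpr ⟨hxY, hxA.2⟩⟩
    have h3 := M.r3 hYAC hYBC (by rw [hunion]; exact hY)
    rw [hunion] at h3
    have hinterC : YA ∩ YB ∈ M.C := M.downClosed hYAC Finset.inter_subset_left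
    have h4 : M.rkQ (A ∩ B) ≤ M.rk (YA ∩ YB) := by
      rw [← hXrk]; exact M.r2 hX hinterC hXinter
    have h5 : M.rk YA ≤ M.rkQ A := by
      refine aux_rk_le_rkQ M hYAC ?_
      rintro e ⟨x, hx, rfl⟩
      exact (Finset.mem_filter.mp (Finset.mem_coe.mp hx)).2
    have h6 : M.rk YB ≤ M.rkQ B := by
      refine aux_rk_le_rkQ M hYBC ?_
      rintro e ⟨x, hx, rfl⟩
      exact (Finset.mem_filter.mp (Finset.mem_coe.mp hx)).2
    have h7 : M.rkQ (A ∪ B) ≤ M.rk Y := by rw [← hWrk]; exact hrkY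
    omega
  -- (7) CR2
  · rintro A B ⟨X, hX, rfl⟩ _ hlt
    obtain ⟨Y, hY, hYsub, hYrk⟩ := aux_rkQ_exists M B
    have hcond : ∀ W ∈ M.C, under G W ⊆ under G X → M.rk W < M.rk Y := by
      intro W hWC hWsub
      rw [hYrk]
      exact lt_of_le_of_lt (aux_rk_le_rkQ M hWC hWsub) hlt
    obtain ⟨y, hyY, hyX, hins⟩ := aux_cr2 M (Y \ X).card X Y hX hY le_rfl hcond
    exact ⟨orbOf G y, hYsub (aux_mem_under hyY), hyX,
      ⟨insert y X, hins, aux_under_insert y X⟩⟩
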